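/- The maximum over θ₁, θ₂, θ₃ ∈ [0, π/2] of |⟨φ|g₃⟩|², where |φ⟩ = ⊗ⱼ (cos θⱼ |0⟩ + sin θⱼ |1⟩) and |g₃⟩ = (|000⟩ + |011⟩ + |110⟩ + |101⟩)/2, is exactly 1/2. -/

import Mathlib

open Real Complex

noncomputable def g₃ : Fin 2 × Fin 2 × Fin 2 → ℂ := fun q =>
  if q = (0, 0, 0) ∨ q = (0, 1, 1) ∨ q = (1, 1, 0) ∨ q = (1, 0, 1)
  then (1 / 2 : ℂ) else 0

noncomputable def prodState (θ₁ θ₂ θ₃ : ℝ) : Fin 2 × Fin 2 × Fin 2 → ℂ :=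
  fun q => (![(Real.cos θ₁ : ℂ), (Real.sin θ₁ : ℂ)] q.1) *
    (![(Real.cos θ₂ : ℂ), (Real.sin θ₂ : ℂ)] q.2.1) *
    (![(Real.cos θ₃ : ℂ), (Real.sin θ₃ : ℂ)] q.2.2)

lemma inner_eq (θ₁ θ₂ θ₃ : ℝ) :
    (∑ q : Fin 2 × Fin 2 × Fin 2, (starRingEnd ℂ) (prodState θ₁ θ₂ θ₃ q) * g₃ q)
    = (((Real.cos θ₁ * Real.cos θ₂ * Real.cos θ₃ + Real.cos θ₁ * Real.sin θ₂ * Real.sin θ₃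
        + Real.sin θ₁ * Real.sin θ₂ * Real.cos θ₃ + Real.sin θ₁ * Real.cos θ₂ * Real.sin θ₃) / 2 : ℝ) : ℂ) := by
  simp [Fintype.sum_prod_type, Fin.sum_univ_two, prodState, g₃, Prod.ext_iff, -Complex.ofReal_cos, -Complex.ofReal_sin, Complex.conj_ofReal]
  push_cast
  ring

theorem gm_of_h3 :
    IsGreatest
      {x : ℝ | ∃ θ₁ θ₂ θ₃ : ℝ, θ₁ ∈ Set.Icc 0 (π / 2) ∧ θ₂ ∈ Set.Icc 0 (π / 2)
        ∧ θ₃ ∈ Set.Icc 0 (π / 2) ∧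
        x = ‖∑ q : Fin 2 × Fin 2 × Fin 2,
          (starRingEnd ℂ) (prodState θ₁ θ₂ θ₃ q) * g₃ q‖ ^ 2}
      (1 / 2) := by
  constructor
  · refine ⟨π/4, π/4, π/4, ?_, ?_, ?_, ?_⟩
    · constructor <;> [positivity; linarith [pi_pos]]
    · constructor <;> [positivity; linarith [pi_pos]]
    · constructor <;> [positivity; linarith [pi_pos]]
    · rw [inner_eq]
      rw [Complex.norm_real, Real.norm_eq_abs, Real.cos_pi_div_four, Real.sin_pi_div_four]
      rw [_root_.sq_abs]
      have h6 : Real.sqrt 2 ^ 6 = 8 := by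
        have h2 : Real.sqrt 2 ^ 2 = 2 := Real.sq_sqrt (by norm_num)
        rw [show Real.sqrt 2 ^ 6 = (Real.sqrt 2 ^ 2)^3 by ring, h2]; norm_num
      linear_combination (-(1:ℝ)/16) * h6
  · rintro x ⟨θ₁, θ₂, θ₃, h1, h2, h3, rfl⟩
    rw [inner_eq, Complex.norm_real, Real.norm_eq_abs, _root_.sq_abs]
    have p1 := Real.sin_sq_add_cos_sq θ₁
    have p2 := Real.sin_sq_add_cos_sq θ₂
    have p3 := Real.sin_sq_add_cos_sq θ₃
    set a := Real.cos θ₁; set b := Real.sin θ₁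
    set c := Real.cos θ₂; set d := Real.sin θ₂
    set e := Real.cos θ₃; set f := Real.sin θ₃
    have hA : (c*e+d*f)^2 + (d*e+c*f)^2 ≤ 2 := by
      have hid : (c*e+d*f)^2 + (d*e+c*f)^2 + ((c*e-d*f)^2 + (d*e-c*f)^2)
          = 2*(c^2+d^2)*(e^2+f^2) := by ring
      have hcd : c^2 + d^2 = 1 := by linarith
      have hef : e^2 + f^2 = 1 := by linarith
      rw [hcd, hef] at hid
      nlinarith [sq_nonneg (c*e-d*f), sq_nonneg (d*e-c*f)]
    have hprod : (a^2+b^2)*((c*e+d*f)^2+(d*e+c*f)^2)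
        = (c*e+d*f)^2+(d*e+c*f)^2 := by
      rw [show a^2+b^2 = 1 by linarith]; ring
    have hS : (a*(c*e+d*f)+b*(d*e+c*f))^2 ≤ 2 := by
      nlinarith [sq_nonneg (a*(d*e+c*f) - b*(c*e+d*f)), hA, hprod]
    nlinarith [hS]
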